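/- arXiv:2209.11898 — 2 statements merged into one kernel-verified Lean document; each statement's English description precedes it below -/
import Mathlib

section
/- For any grid state x of an n-by-n grid diagram, the Maslov grading M(x) = J(x,x) - 2J(x,O) + J(O,O) + 1 is an integer. -/
/-- `pairCount P Q` counts pairs `(p, q) ∈ P × Q` with `p` strictly southwest of `q`. -/
noncomputable def pairCount (P Q : Finset (ℝ × ℝ)) : ℕ :=
  ((P ×ˢ Q).filter (fun pq => pq.1.1 < pq.2.1 ∧ pq.1.2 < pq.2.2)).card

/-- `J(P,Q) = (I(P,Q) + I(Q,P))/2`. -/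
noncomputable def Jfun (P Q : Finset (ℝ × ℝ)) : ℚ :=
  ((pairCount P Q : ℚ) + (pairCount Q P : ℚ)) / 2

/-- The points of the grid state associated to the permutation `σ`:
one point on each horizontal and each vertical grid line, at integer coordinates. -/
noncomputable def gridStatePts (n : ℕ) (σ : Equiv.Perm (Fin n)) : Finset (ℝ × ℝ) :=
  Finset.univ.image (fun i : Fin n => (((i : ℕ) : ℝ), ((σ i : ℕ) : ℝ)))

/-- The centers of the marked squares associated to the permutation `σ`:
one marking in each row and each column, at half-integer coordinates. -/
noncomputable def markingPts (n : ℕ) (σ : Equiv.Perm (Fin n)) : Finset (ℝ × ℝ) :=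
  Finset.univ.image (fun i : Fin n => (((i : ℕ) : ℝ) + 1/2, ((σ i : ℕ) : ℝ) + 1/2))

/-- The Maslov grading `M(x) = J(x,x) - 2 J(x,O) + J(O,O) + 1` of the grid state `σx`
with respect to the markings `σO`. -/
noncomputable def maslov (n : ℕ) (σx σO : Equiv.Perm (Fin n)) : ℚ :=
  Jfun (gridStatePts n σx) (gridStatePts n σx)
    - 2 * Jfun (gridStatePts n σx) (markingPts n σO)
    + Jfun (markingPts n σO) (markingPts n σO) + 1

/-- For any grid state `x` of an `n`-by-`n` grid diagram, the Maslov grading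
`M(x) = J(x,x) - 2J(x,O) + J(O,O) + 1` is an integer. -/
theorem stmt1 (n : ℕ) (σx σO : Equiv.Perm (Fin n)) :
    ∃ m : ℤ, maslov n σx σO = (m : ℚ) := by
  refine ⟨(pairCount (gridStatePts n σx) (gridStatePts n σx) : ℤ)
    - pairCount (gridStatePts n σx) (markingPts n σO)
    - pairCount (markingPts n σO) (gridStatePts n σx)
    + pairCount (markingPts n σO) (markingPts n σO) + 1, ?_⟩
  unfold maslov Jfun
  push_cast
  ring
end

section
/- If x and y are grid states connected by a rectangle r (an embedded rectangle in the grid torus with corners alternating between x and y, going from x to y), then M(x) - M(y) = 1 - 2·|r ∩ O| + 2·|x ∩ Int(r)|. -/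
set_option maxHeartbeats 1000000

/-- The grid state obtained from `σx` by the rectangle with incoming (SW and NE) corners
at columns `i`, `j`: the rows `σx i` and `σx j` are exchanged. -/
def rectTarget (n : ℕ) (σx : Equiv.Perm (Fin n)) (i j : Fin n) : Equiv.Perm (Fin n) :=
  σx.trans (Equiv.swap (σx i) (σx j))

/-- The number of markings (for the marking permutation `σm`) contained in the rectangle
with SW corner `(i, σx i)` and NE corner `(j, σx j)`. -/
def rectMarkCount (n : ℕ) (σx σm : Equiv.Perm (Fin n)) (i j : Fin n) : ℕ :=
  (Finset.univ.filter (fun k : Fin n =>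
    (i : ℕ) ≤ (k : ℕ) ∧ (k : ℕ) < (j : ℕ) ∧
    (σx i : ℕ) ≤ (σm k : ℕ) ∧ (σm k : ℕ) < (σx j : ℕ))).card

/-- The number of points of the grid state `σx` in the interior of the rectangle
with SW corner `(i, σx i)` and NE corner `(j, σx j)`. -/
def rectIntCount (n : ℕ) (σx : Equiv.Perm (Fin n)) (i j : Fin n) : ℕ :=
  (Finset.univ.filter (fun k : Fin n =>
    (i : ℕ) < (k : ℕ) ∧ (k : ℕ) < (j : ℕ) ∧
    (σx i : ℕ) < (σx k : ℕ) ∧ (σx k : ℕ) < (σx j : ℕ))).card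

open Finset

section Aux

/- auxiliary lemmas -/

lemma aux_pc_eq {n : ℕ} (f g : Fin n → ℝ × ℝ) (hf : Function.Injective f)
    (hg : Function.Injective g) :
    (pairCount (univ.image f) (univ.image g) : ℚ) =
      ∑ a : Fin n, ∑ b : Fin n,
        if (f a).1 < (g b).1 ∧ (f a).2 < (g b).2 then (1:ℚ) else 0 := by
  have himg : (univ.image f) ×ˢ (univ.image g) = (univ ×ˢ univ).image (Prod.map f g) := by
    ext ⟨p, q⟩
    simp [Prod.ext_iff, Prod.map, and_assoc]
    aesop
  rw [pairCount, himg, Finset.filter_image, Finset.card_image_of_injective _ (hf.prodMap hg),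
    Finset.card_filter]
  push_cast
  rw [Finset.sum_product]
  simp [Prod.map]

lemma aux_half_lt (a b : ℕ) : ((a:ℝ) < (b:ℝ) + 1/2) ↔ a ≤ b := by
  constructor
  · intro h
    by_contra hc
    push_neg at hc
    have : (b:ℝ) + 1 ≤ a := by exact_mod_cast hc
    linarith
  · intro h
    have : (a:ℝ) ≤ b := by exact_mod_cast h
    linarith

lemma aux_lt_half (a b : ℕ) : ((a:ℝ) + 1/2 < (b:ℝ)) ↔ a < b := by
  constructor
  · intro h
    by_contra hc
    push_neg at hc
    have : (b:ℝ) ≤ a := by exact_mod_cast hc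
    linarith
  · intro h
    have : (a:ℝ) + 1 ≤ b := by exact_mod_cast h
    linarith

lemma aux_grid_inj {n : ℕ} (σ : Equiv.Perm (Fin n)) :
    Function.Injective (fun a : Fin n => (((a : ℕ) : ℝ), ((σ a : ℕ) : ℝ))) := by
  intro a b h
  have h1 : ((a : ℕ) : ℝ) = ((b : ℕ) : ℝ) := congrArg Prod.fst h
  exact Fin.val_injective (Nat.cast_injective h1)

lemma aux_mark_inj {n : ℕ} (σ : Equiv.Perm (Fin n)) :
    Function.Injective (fun a : Fin n => (((a : ℕ) : ℝ) + 1/2, ((σ a : ℕ) : ℝ) + 1/2)) := by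
  intro a b h
  have h1 : ((a : ℕ) : ℝ) + 1/2 = ((b : ℕ) : ℝ) + 1/2 := congrArg Prod.fst h
  have h2 : ((a : ℕ) : ℝ) = ((b : ℕ) : ℝ) := by linarith
  exact Fin.val_injective (Nat.cast_injective h2)

lemma aux_pc_gg {n : ℕ} (σ τ : Equiv.Perm (Fin n)) :
    (pairCount (gridStatePts n σ) (gridStatePts n τ) : ℚ) =
      ∑ a : Fin n, ∑ b : Fin n,
        if (a : ℕ) < (b : ℕ) ∧ (σ a : ℕ) < (τ b : ℕ) then (1:ℚ) else 0 := by
  rw [gridStatePts, gridStatePts, aux_pc_eq _ _ (aux_grid_inj σ) (aux_grid_inj τ)]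
  simp only [Nat.cast_lt]

lemma aux_pc_gm {n : ℕ} (σ τ : Equiv.Perm (Fin n)) :
    (pairCount (gridStatePts n σ) (markingPts n τ) : ℚ) =
      ∑ a : Fin n, ∑ b : Fin n,
        if (a : ℕ) ≤ (b : ℕ) ∧ (σ a : ℕ) ≤ (τ b : ℕ) then (1:ℚ) else 0 := by
  rw [gridStatePts, markingPts, aux_pc_eq _ _ (aux_grid_inj σ) (aux_mark_inj τ)]
  simp only [aux_half_lt]

lemma aux_pc_mg {n : ℕ} (σ τ : Equiv.Perm (Fin n)) :
    (pairCount (markingPts n σ) (gridStatePts n τ) : ℚ) =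
      ∑ a : Fin n, ∑ b : Fin n,
        if (a : ℕ) < (b : ℕ) ∧ (σ a : ℕ) < (τ b : ℕ) then (1:ℚ) else 0 := by
  rw [markingPts, gridStatePts, aux_pc_eq _ _ (aux_mark_inj σ) (aux_grid_inj τ)]
  simp only [aux_lt_half]

lemma aux_pc_mm {n : ℕ} (σ τ : Equiv.Perm (Fin n)) :
    (pairCount (markingPts n σ) (markingPts n τ) : ℚ) =
      ∑ a : Fin n, ∑ b : Fin n,
        if (a : ℕ) < (b : ℕ) ∧ (σ a : ℕ) < (τ b : ℕ) then (1:ℚ) else 0 := by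
  rw [markingPts, markingPts, aux_pc_eq _ _ (aux_mark_inj σ) (aux_mark_inj τ)]
  simp only [add_lt_add_iff_right, Nat.cast_lt]

lemma aux_rt_i {n : ℕ} (σ : Equiv.Perm (Fin n)) (i j : Fin n) : rectTarget n σ i j i = σ j := by
  simp [rectTarget, Equiv.swap_apply_left]

lemma aux_rt_j {n : ℕ} (σ : Equiv.Perm (Fin n)) (i j : Fin n) : rectTarget n σ i j j = σ i := by
  simp [rectTarget, Equiv.swap_apply_right]

lemma aux_rt_o {n : ℕ} (σ : Equiv.Perm (Fin n)) (i j : Fin n) (k : Fin n)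
    (h1 : k ≠ i) (h2 : k ≠ j) : rectTarget n σ i j k = σ k := by
  simp only [rectTarget, Equiv.trans_apply]
  exact Equiv.swap_apply_of_ne_of_ne (fun h => h1 (σ.injective h)) (fun h => h2 (σ.injective h))

lemma aux_val_ne {n : ℕ} (σ : Equiv.Perm (Fin n)) (a b : Fin n) (h : a ≠ b) :
    (σ a : ℕ) ≠ (σ b : ℕ) :=
  fun hh => h (σ.injective (Fin.val_injective hh))

lemma aux_decomp {n : ℕ} {M : Type*} [AddCommGroup M] (i j : Fin n) (hij : i ≠ j)
    (d : Fin n → Fin n → M)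
    (h0 : ∀ a b, a ≠ i → a ≠ j → b ≠ i → b ≠ j → d a b = 0) :
    ∑ a, ∑ b, d a b =
      (∑ k ∈ univ \ {i, j}, (d i k + d j k + (d k i + d k j)))
        + (d i i + d i j + (d j i + d j j)) := by
  have hsplit : ∀ f : Fin n → M, ∑ a, f a = (∑ a ∈ univ \ {i, j}, f a) + (f i + f j) := by
    intro f
    rw [← Finset.sum_sdiff (Finset.subset_univ {i, j}), Finset.sum_pair hij]
  rw [hsplit fun a => ∑ b, d a b]
  have hinner : ∀ a, (∑ b, d a b) = (∑ b ∈ univ \ {i, j}, d a b) + (d a i + d a j) :=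
    fun a => hsplit fun b => d a b
  have hz : ∀ a ∈ univ \ ({i, j} : Finset (Fin n)),
      (∑ b ∈ univ \ ({i, j} : Finset (Fin n)), d a b) = 0 := by
    intro a ha
    simp only [mem_sdiff, mem_insert, mem_singleton, not_or] at ha
    refine Finset.sum_eq_zero fun b hb => ?_
    simp only [mem_sdiff, mem_insert, mem_singleton, not_or] at hb
    exact h0 a b ha.2.1 ha.2.2 hb.2.1 hb.2.2
  calc (∑ a ∈ univ \ {i, j}, ∑ b, d a b) + ((∑ b, d i b) + ∑ b, d j b)
      = (∑ a ∈ univ \ {i, j}, ((∑ b ∈ univ \ {i, j}, d a b) + (d a i + d a j)))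
        + (((∑ b ∈ univ \ {i, j}, d i b) + (d i i + d i j))
          + ((∑ b ∈ univ \ {i, j}, d j b) + (d j i + d j j))) := by
        simp_rw [hinner]
    _ = _ := by
        rw [Finset.sum_add_distrib, Finset.sum_eq_zero hz, Finset.sum_add_distrib,
          ← Finset.sum_add_distrib]
        simp only [Finset.sum_add_distrib]
        abel

lemma aux_hsplitQ {n : ℕ} (i j : Fin n) (hij : i ≠ j) (f : Fin n → ℚ) :
    ∑ a, f a = (∑ a ∈ univ \ {i, j}, f a) + (f i + f j) := by
  rw [← Finset.sum_sdiff (Finset.subset_univ {i, j}), Finset.sum_pair hij]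

lemma aux_diff_xx {n : ℕ} (σ : Equiv.Perm (Fin n)) (i j : Fin n)
    (hc : (i : ℕ) < j) (hr : (σ i : ℕ) < σ j) :
    (∑ a : Fin n, ∑ b : Fin n, if (a : ℕ) < b ∧ (σ a : ℕ) < σ b then (1:ℚ) else 0)
      - (∑ a : Fin n, ∑ b : Fin n, if (a : ℕ) < b ∧ (rectTarget n σ i j a : ℕ) < (rectTarget n σ i j b : ℕ)
          then (1:ℚ) else 0)
    = 1 + 2 * ∑ k : Fin n, if (i : ℕ) < k ∧ (k : ℕ) < j ∧ (σ i : ℕ) < σ k ∧ (σ k : ℕ) < σ j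
        then (1:ℚ) else 0 := by
  have hij : i ≠ j := fun h => absurd hc (by simp [h])
  set τ := rectTarget n σ i j with hτ
  rw [← Finset.sum_sub_distrib]
  simp_rw [← Finset.sum_sub_distrib]
  rw [aux_decomp i j hij
    (fun a b => (if (a : ℕ) < b ∧ (σ a : ℕ) < σ b then (1:ℚ) else 0)
      - (if (a : ℕ) < b ∧ (τ a : ℕ) < τ b then (1:ℚ) else 0))
    (by
      intro a b ha1 ha2 hb1 hb2
      simp only [hτ, aux_rt_o σ i j a ha1 ha2, aux_rt_o σ i j b hb1 hb2, sub_self])]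
  rw [aux_hsplitQ i j hij]
  have hGi : (if (i : ℕ) < i ∧ (i : ℕ) < j ∧ (σ i : ℕ) < σ i ∧ (σ i : ℕ) < σ j
      then (1:ℚ) else 0) = 0 := by split_ifs with h <;> first | rfl | omega
  have hGj : (if (i : ℕ) < j ∧ (j : ℕ) < j ∧ (σ i : ℕ) < σ j ∧ (σ j : ℕ) < σ j
      then (1:ℚ) else 0) = 0 := by split_ifs with h <;> first | rfl | omega
  have hpt : ∀ k ∈ univ \ ({i, j} : Finset (Fin n)),
      ((if (i : ℕ) < k ∧ (σ i : ℕ) < σ k then (1:ℚ) else 0)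
          - (if (i : ℕ) < k ∧ (τ i : ℕ) < τ k then (1:ℚ) else 0)
        + ((if (j : ℕ) < k ∧ (σ j : ℕ) < σ k then (1:ℚ) else 0)
          - (if (j : ℕ) < k ∧ (τ j : ℕ) < τ k then (1:ℚ) else 0))
        + ((if (k : ℕ) < i ∧ (σ k : ℕ) < σ i then (1:ℚ) else 0)
          - (if (k : ℕ) < i ∧ (τ k : ℕ) < τ i then (1:ℚ) else 0)
          + ((if (k : ℕ) < j ∧ (σ k : ℕ) < σ j then (1:ℚ) else 0)
            - (if (k : ℕ) < j ∧ (τ k : ℕ) < τ j then (1:ℚ) else 0))))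
      = 2 * (if (i : ℕ) < k ∧ (k : ℕ) < j ∧ (σ i : ℕ) < σ k ∧ (σ k : ℕ) < σ j
          then (1:ℚ) else 0) := by
    intro k hk
    simp only [mem_sdiff, mem_insert, mem_singleton, not_or] at hk
    obtain ⟨-, hk1, hk2⟩ := hk
    rw [hτ, aux_rt_i, aux_rt_j, aux_rt_o σ i j k hk1 hk2]
    have e1 : (k : ℕ) ≠ i := fun h => hk1 (Fin.val_injective h)
    have e2 : (k : ℕ) ≠ j := fun h => hk2 (Fin.val_injective h)
    have e3 := aux_val_ne σ k i hk1
    have e4 := aux_val_ne σ k j hk2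
    split_ifs <;> (try norm_num) <;> omega
  rw [Finset.sum_congr rfl hpt, ← Finset.mul_sum]
  have hC : ((if (i : ℕ) < i ∧ (σ i : ℕ) < σ i then (1:ℚ) else 0)
        - (if (i : ℕ) < i ∧ (τ i : ℕ) < τ i then (1:ℚ) else 0)
      + ((if (i : ℕ) < j ∧ (σ i : ℕ) < σ j then (1:ℚ) else 0)
        - (if (i : ℕ) < j ∧ (τ i : ℕ) < τ j then (1:ℚ) else 0))
      + ((if (j : ℕ) < i ∧ (σ j : ℕ) < σ i then (1:ℚ) else 0)
        - (if (j : ℕ) < i ∧ (τ j : ℕ) < τ i then (1:ℚ) else 0)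
        + ((if (j : ℕ) < j ∧ (σ j : ℕ) < σ j then (1:ℚ) else 0)
          - (if (j : ℕ) < j ∧ (τ j : ℕ) < τ j then (1:ℚ) else 0))))
      = 1 := by
    rw [hτ, aux_rt_i, aux_rt_j]
    split_ifs <;> (try norm_num) <;> omega
  rw [hC, hGi, hGj]
  ring

lemma aux_diff_xO {n : ℕ} (σ σO : Equiv.Perm (Fin n)) (i j : Fin n)
    (hc : (i : ℕ) < j) (hr : (σ i : ℕ) < σ j) :
    (∑ a : Fin n, ∑ b : Fin n, if (a : ℕ) ≤ b ∧ (σ a : ℕ) ≤ σO b then (1:ℚ) else 0)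
      - (∑ a : Fin n, ∑ b : Fin n, if (a : ℕ) ≤ b ∧ (rectTarget n σ i j a : ℕ) ≤ σO b
          then (1:ℚ) else 0)
    = ∑ k : Fin n, if (i : ℕ) ≤ k ∧ (k : ℕ) < j ∧ (σ i : ℕ) ≤ σO k ∧ (σO k : ℕ) < σ j
        then (1:ℚ) else 0 := by
  have hij : i ≠ j := fun h => absurd hc (by simp [h])
  set τ := rectTarget n σ i j with hτ
  rw [← Finset.sum_sub_distrib]
  simp_rw [← Finset.sum_sub_distrib]
  rw [aux_decomp i j hij
    (fun a b => (if (a : ℕ) ≤ b ∧ (σ a : ℕ) ≤ σO b then (1:ℚ) else 0)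
      - (if (a : ℕ) ≤ b ∧ (τ a : ℕ) ≤ σO b then (1:ℚ) else 0))
    (by
      intro a b ha1 ha2 _ _
      simp only [hτ, aux_rt_o σ i j a ha1 ha2, sub_self])]
  rw [aux_hsplitQ i j hij (fun k => if (i : ℕ) ≤ k ∧ (k : ℕ) < j ∧ (σ i : ℕ) ≤ σO k ∧ (σO k : ℕ) < σ j
        then (1:ℚ) else 0)]
  have hpt : ∀ k ∈ univ \ ({i, j} : Finset (Fin n)),
      ((if (i : ℕ) ≤ k ∧ (σ i : ℕ) ≤ σO k then (1:ℚ) else 0)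
          - (if (i : ℕ) ≤ k ∧ (τ i : ℕ) ≤ σO k then (1:ℚ) else 0)
        + ((if (j : ℕ) ≤ k ∧ (σ j : ℕ) ≤ σO k then (1:ℚ) else 0)
          - (if (j : ℕ) ≤ k ∧ (τ j : ℕ) ≤ σO k then (1:ℚ) else 0))
        + ((if (k : ℕ) ≤ i ∧ (σ k : ℕ) ≤ σO i then (1:ℚ) else 0)
          - (if (k : ℕ) ≤ i ∧ (τ k : ℕ) ≤ σO i then (1:ℚ) else 0)
          + ((if (k : ℕ) ≤ j ∧ (σ k : ℕ) ≤ σO j then (1:ℚ) else 0)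
            - (if (k : ℕ) ≤ j ∧ (τ k : ℕ) ≤ σO j then (1:ℚ) else 0))))
      = (if (i : ℕ) ≤ k ∧ (k : ℕ) < j ∧ (σ i : ℕ) ≤ σO k ∧ (σO k : ℕ) < σ j
          then (1:ℚ) else 0) := by
    intro k hk
    simp only [mem_sdiff, mem_insert, mem_singleton, not_or] at hk
    obtain ⟨-, hk1, hk2⟩ := hk
    rw [hτ, aux_rt_i, aux_rt_j, aux_rt_o σ i j k hk1 hk2]
    have e1 : (k : ℕ) ≠ i := fun h => hk1 (Fin.val_injective h)
    have e2 : (k : ℕ) ≠ j := fun h => hk2 (Fin.val_injective h)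
    split_ifs <;> (try norm_num) <;> omega
  rw [Finset.sum_congr rfl hpt]
  have hC : ((if (i : ℕ) ≤ i ∧ (σ i : ℕ) ≤ σO i then (1:ℚ) else 0)
        - (if (i : ℕ) ≤ i ∧ (τ i : ℕ) ≤ σO i then (1:ℚ) else 0)
      + ((if (i : ℕ) ≤ j ∧ (σ i : ℕ) ≤ σO j then (1:ℚ) else 0)
        - (if (i : ℕ) ≤ j ∧ (τ i : ℕ) ≤ σO j then (1:ℚ) else 0))
      + ((if (j : ℕ) ≤ i ∧ (σ j : ℕ) ≤ σO i then (1:ℚ) else 0)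
        - (if (j : ℕ) ≤ i ∧ (τ j : ℕ) ≤ σO i then (1:ℚ) else 0)
        + ((if (j : ℕ) ≤ j ∧ (σ j : ℕ) ≤ σO j then (1:ℚ) else 0)
          - (if (j : ℕ) ≤ j ∧ (τ j : ℕ) ≤ σO j then (1:ℚ) else 0))))
      = (if (i : ℕ) ≤ i ∧ (i : ℕ) < j ∧ (σ i : ℕ) ≤ σO i ∧ (σO i : ℕ) < σ j
          then (1:ℚ) else 0)
        + (if (i : ℕ) ≤ j ∧ (j : ℕ) < j ∧ (σ i : ℕ) ≤ σO j ∧ (σO j : ℕ) < σ j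
          then (1:ℚ) else 0) := by
    rw [hτ, aux_rt_i, aux_rt_j]
    split_ifs <;> (try norm_num) <;> omega
  rw [hC]

lemma aux_diff_Ox {n : ℕ} (σ σO : Equiv.Perm (Fin n)) (i j : Fin n)
    (hc : (i : ℕ) < j) (hr : (σ i : ℕ) < σ j) :
    (∑ a : Fin n, ∑ b : Fin n, if (a : ℕ) < b ∧ (σO a : ℕ) < σ b then (1:ℚ) else 0)
      - (∑ a : Fin n, ∑ b : Fin n, if (a : ℕ) < b ∧ (σO a : ℕ) < rectTarget n σ i j b
          then (1:ℚ) else 0)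
    = ∑ k : Fin n, if (i : ℕ) ≤ k ∧ (k : ℕ) < j ∧ (σ i : ℕ) ≤ σO k ∧ (σO k : ℕ) < σ j
        then (1:ℚ) else 0 := by
  have hij : i ≠ j := fun h => absurd hc (by simp [h])
  set τ := rectTarget n σ i j with hτ
  rw [← Finset.sum_sub_distrib]
  simp_rw [← Finset.sum_sub_distrib]
  rw [aux_decomp i j hij
    (fun a b => (if (a : ℕ) < b ∧ (σO a : ℕ) < σ b then (1:ℚ) else 0)
      - (if (a : ℕ) < b ∧ (σO a : ℕ) < τ b then (1:ℚ) else 0))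
    (by
      intro a b _ _ hb1 hb2
      simp only [hτ, aux_rt_o σ i j b hb1 hb2, sub_self])]
  rw [aux_hsplitQ i j hij (fun k => if (i : ℕ) ≤ k ∧ (k : ℕ) < j ∧ (σ i : ℕ) ≤ σO k ∧ (σO k : ℕ) < σ j
        then (1:ℚ) else 0)]
  have hpt : ∀ k ∈ univ \ ({i, j} : Finset (Fin n)),
      ((if (i : ℕ) < k ∧ (σO i : ℕ) < σ k then (1:ℚ) else 0)
          - (if (i : ℕ) < k ∧ (σO i : ℕ) < τ k then (1:ℚ) else 0)
        + ((if (j : ℕ) < k ∧ (σO j : ℕ) < σ k then (1:ℚ) else 0)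
          - (if (j : ℕ) < k ∧ (σO j : ℕ) < τ k then (1:ℚ) else 0))
        + ((if (k : ℕ) < i ∧ (σO k : ℕ) < σ i then (1:ℚ) else 0)
          - (if (k : ℕ) < i ∧ (σO k : ℕ) < τ i then (1:ℚ) else 0)
          + ((if (k : ℕ) < j ∧ (σO k : ℕ) < σ j then (1:ℚ) else 0)
            - (if (k : ℕ) < j ∧ (σO k : ℕ) < τ j then (1:ℚ) else 0))))
      = (if (i : ℕ) ≤ k ∧ (k : ℕ) < j ∧ (σ i : ℕ) ≤ σO k ∧ (σO k : ℕ) < σ j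
          then (1:ℚ) else 0) := by
    intro k hk
    simp only [mem_sdiff, mem_insert, mem_singleton, not_or] at hk
    obtain ⟨-, hk1, hk2⟩ := hk
    rw [hτ, aux_rt_i, aux_rt_j, aux_rt_o σ i j k hk1 hk2]
    have e1 : (k : ℕ) ≠ i := fun h => hk1 (Fin.val_injective h)
    have e2 : (k : ℕ) ≠ j := fun h => hk2 (Fin.val_injective h)
    split_ifs <;> (try norm_num) <;> omega
  rw [Finset.sum_congr rfl hpt]
  have hC : ((if (i : ℕ) < i ∧ (σO i : ℕ) < σ i then (1:ℚ) else 0)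
        - (if (i : ℕ) < i ∧ (σO i : ℕ) < τ i then (1:ℚ) else 0)
      + ((if (i : ℕ) < j ∧ (σO i : ℕ) < σ j then (1:ℚ) else 0)
        - (if (i : ℕ) < j ∧ (σO i : ℕ) < τ j then (1:ℚ) else 0))
      + ((if (j : ℕ) < i ∧ (σO j : ℕ) < σ i then (1:ℚ) else 0)
        - (if (j : ℕ) < i ∧ (σO j : ℕ) < τ i then (1:ℚ) else 0)
        + ((if (j : ℕ) < j ∧ (σO j : ℕ) < σ j then (1:ℚ) else 0)
          - (if (j : ℕ) < j ∧ (σO j : ℕ) < τ j then (1:ℚ) else 0))))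
      = (if (i : ℕ) ≤ i ∧ (i : ℕ) < j ∧ (σ i : ℕ) ≤ σO i ∧ (σO i : ℕ) < σ j
          then (1:ℚ) else 0)
        + (if (i : ℕ) ≤ j ∧ (j : ℕ) < j ∧ (σ i : ℕ) ≤ σO j ∧ (σO j : ℕ) < σ j
          then (1:ℚ) else 0) := by
    rw [hτ, aux_rt_i, aux_rt_j]
    split_ifs <;> (try norm_num) <;> omega
  rw [hC]

lemma aux_markCast {n : ℕ} (σx σO : Equiv.Perm (Fin n)) (i j : Fin n) :
    (rectMarkCount n σx σO i j : ℚ) =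
      ∑ k : Fin n, if (i : ℕ) ≤ k ∧ (k : ℕ) < j ∧ (σx i : ℕ) ≤ σO k ∧ (σO k : ℕ) < σx j
        then (1:ℚ) else 0 := by
  rw [rectMarkCount, Finset.card_filter]
  push_cast
  rfl

lemma aux_intCast {n : ℕ} (σx : Equiv.Perm (Fin n)) (i j : Fin n) :
    (rectIntCount n σx i j : ℚ) =
      ∑ k : Fin n, if (i : ℕ) < k ∧ (k : ℕ) < j ∧ (σx i : ℕ) < σx k ∧ (σx k : ℕ) < σx j
        then (1:ℚ) else 0 := by
  rw [rectIntCount, Finset.card_filter]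
  push_cast
  rfl

end Aux

/-- If `x` and `y` are grid states connected by a rectangle `r`, then
`M(x) - M(y) = 1 - 2 |r ∩ O| + 2 |x ∩ Int r|`. -/
theorem stmt3 (n : ℕ) (σx σO : Equiv.Perm (Fin n)) (i j : Fin n)
    (hcol : (i : ℕ) < (j : ℕ)) (hrow : (σx i : ℕ) < (σx j : ℕ)) :
    maslov n σx σO - maslov n (rectTarget n σx i j) σO =
      1 - 2 * (rectMarkCount n σx σO i j : ℚ) + 2 * (rectIntCount n σx i j : ℚ) := by
  have h1 := aux_diff_xx σx i j hcol hrow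
  have h2 := aux_diff_xO σx σO i j hcol hrow
  have h3 := aux_diff_Ox σx σO i j hcol hrow
  rw [aux_markCast, aux_intCast]
  simp only [maslov, Jfun, aux_pc_gg, aux_pc_gm, aux_pc_mg, aux_pc_mm]
  linarith [h1, h2, h3]
end
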